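/- A triple (K, P, τ) ∈ 𝔻^T is a fixed point of Ψ^T if and only if it is a fixed point of the recursive map Ψ̄^T, i.e. (K, P, τ) = Ψ^T(K, P, τ) if and only if (K, P, τ) = Ψ̄^T(K, P, τ). -/

import Mathlib

open MeasureTheory

namespace Paper

open Classical in
/-- real-valued indicator of a proposition -/
noncomputable def indR (p : Prop) : ℝ := if p then 1 else 0

open Classical in
/-- boolean indicator of a proposition -/
noncomputable def indB (p : Prop) : Bool := if p then true else false

/-- The atom of the σ-algebra `m` containing the point `ω`:
the intersection of all `m`-measurable sets containing `ω`. -/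
def atomOf {Ω : Type*} (m : MeasurableSpace Ω) (ω : Ω) : Set Ω :=
  ⋂₀ {s : Set Ω | MeasurableSet[m] s ∧ ω ∈ s}

/-- The set `S`, with the order induced from the ambient preorder, is a nonempty complete
lattice: it has a greatest and a least element and every subset of `S` has a least upper
bound and a greatest lower bound within `S`. -/
def LatticeStructure {X : Type*} [Preorder X] (S : Set X) : Prop :=
  S.Nonempty ∧
  (∃ top ∈ S, ∀ z ∈ S, z ≤ top) ∧
  (∃ bot ∈ S, ∀ z ∈ S, bot ≤ z) ∧
  (∀ A ⊆ S,
    (∃ u ∈ S, (∀ a ∈ A, a ≤ u) ∧ ∀ w ∈ S, (∀ a ∈ A, a ≤ w) → u ≤ w) ∧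
    (∃ v ∈ S, (∀ a ∈ A, v ≤ a) ∧ ∀ w ∈ S, (∀ a ∈ A, w ≤ a) → w ≤ v))

/-- The space of triples `(K, P, τ)`: capital process, survival-probability process,
default-time vector, with the componentwise (pointwise) order. -/
abbrev Tri (Ω : Type*) (n ℓ : ℕ) :=
  (Fin (ℓ+1) → Ω → Fin n → ℝ) × (Fin (ℓ+1) → Ω → Fin n → ℝ) × (Fin n → Ω → ℝ)

/-- Data of the single-maturity interbank model. -/
structure SM (Ω : Type*) (n ℓ : ℕ) where
  /-- maturity -/
  T : ℝ
  /-- times `0 = t 0 < t 1 < ... < t ℓ = T` -/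
  t : Fin (ℓ+1) → ℝ
  /-- external asset process -/
  x : Fin (ℓ+1) → Ω → Fin n → ℝ
  /-- interbank liabilities -/
  L : Fin n → Fin n → ℝ
  /-- external liabilities -/
  L0 : Fin n → ℝ
  /-- recovery rate -/
  β : ℝ
  /-- risk-free rate -/
  r : ℝ

namespace SM

variable {Ω : Type*} {n ℓ : ℕ}

/-- total liabilities `p̄_i` -/
noncomputable def pbar (M : SM Ω n ℓ) (i : Fin n) : ℝ := (∑ j, M.L i j) + M.L0 i

/-- discount factor `e^{-r (T - t l)}` -/
noncomputable def disc (M : SM Ω n ℓ) (l : Fin (ℓ+1)) : ℝ :=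
  Real.exp (-(M.r * (M.T - M.t l)))

/-- the capital component `Ψ^T_K` of the clearing map -/
noncomputable def ΨK (M : SM Ω n ℓ) (l : Fin (ℓ+1)) (Pt : Ω → Fin n → ℝ)
    (ω : Ω) (i : Fin n) : ℝ :=
  M.x l ω i + M.disc l * (∑ j, M.L j i * (M.β + (1 - M.β) * Pt ω j))
    - M.disc l * M.pbar i

/-- the default-time component `Ψ^T_τ` of the clearing map: the first time `t l` at which
the capital of bank `i` is negative, and `T + 1` if the capital stays nonnegative -/
noncomputable def Ψτ (M : SM Ω n ℓ) (K : Fin (ℓ+1) → Ω → Fin n → ℝ)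
    (i : Fin n) (ω : Ω) : ℝ :=
  sInf (insert (M.T + 1) ((fun l => M.t l) '' {l : Fin (ℓ+1) | K l ω i < 0}))

/-- the survival-probability component `Ψ^T_P` of the clearing map:
`ℙ(τ_i > T | 𝓕 l)` -/
noncomputable def ΨP [MeasurableSpace Ω] (M : SM Ω n ℓ)
    (𝓕 : Fin (ℓ+1) → MeasurableSpace Ω) (μ : Measure Ω)
    (τ : Fin n → Ω → ℝ) (l : Fin (ℓ+1)) (ω : Ω) (i : Fin n) : ℝ :=
  (μ[fun ω' => indR (M.T < τ i ω') | 𝓕 l]) ω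

/-- membership in the domain `𝔻^T`: adaptedness, the balance-sheet bounds on `K`,
`P` valued in `[0,1]`, and `τ` valued in `{t_0, ..., t_ℓ, T+1}` -/
def memD [MeasurableSpace Ω] (M : SM Ω n ℓ) (𝓕 : Fin (ℓ+1) → MeasurableSpace Ω)
    (K P : Fin (ℓ+1) → Ω → Fin n → ℝ) (τ : Fin n → Ω → ℝ) : Prop :=
  (∀ l i, Measurable[𝓕 l] fun ω => K l ω i) ∧
  (∀ l i, Measurable[𝓕 l] fun ω => P l ω i) ∧
  (∀ l ω i, M.x l ω i - M.disc l * M.pbar i ≤ K l ω i) ∧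
  (∀ l ω i, K l ω i ≤ M.x l ω i + M.disc l * ((∑ j, M.L j i) - M.pbar i)) ∧
  (∀ l ω i, 0 ≤ P l ω i ∧ P l ω i ≤ 1) ∧
  (∀ i ω, (∃ l, τ i ω = M.t l) ∨ τ i ω = M.T + 1)

/-- the clearing map `Ψ^T` -/
noncomputable def Ψmap [MeasurableSpace Ω] (M : SM Ω n ℓ)
    (𝓕 : Fin (ℓ+1) → MeasurableSpace Ω) (μ : Measure Ω) (z : Tri Ω n ℓ) : Tri Ω n ℓ :=
  (fun l ω i => M.ΨK l (z.2.1 l) ω i,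
   fun l ω i => M.ΨP 𝓕 μ z.2.2 l ω i,
   fun i ω => M.Ψτ z.1 i ω)

/-- the set of clearing solutions: fixed points of `Ψ^T` in `𝔻^T` -/
def clearingSet [MeasurableSpace Ω] (M : SM Ω n ℓ)
    (𝓕 : Fin (ℓ+1) → MeasurableSpace Ω) (μ : Measure Ω) : Set (Tri Ω n ℓ) :=
  {z | M.memD 𝓕 z.1 z.2.1 z.2.2 ∧ M.Ψmap 𝓕 μ z = z}

/-- Standing assumptions of the single-maturity model. -/
structure Valid [MeasurableSpace Ω] (M : SM Ω n ℓ)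
    (𝓕 : Fin (ℓ+1) → MeasurableSpace Ω) (μ : Measure Ω) : Prop where
  hn : 1 ≤ n
  hTop : (inferInstance : MeasurableSpace Ω) = ⊤
  hprob : IsProbabilityMeasure μ
  hpos : ∀ ω : Ω, 0 < μ {ω}
  hmono : Monotone 𝓕
  h0 : 𝓕 0 = ⊥
  hlast : 𝓕 (Fin.last ℓ) = (inferInstance : MeasurableSpace Ω)
  ht : StrictMono M.t
  ht0 : M.t 0 = 0
  htT : M.t (Fin.last ℓ) = M.T
  hx : ∀ l i, Measurable[𝓕 l] fun ω => M.x l ω i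
  hx0 : ∀ l ω i, 0 ≤ M.x l ω i
  hL : ∀ i j, 0 ≤ M.L i j
  hLd : ∀ i, M.L i i = 0
  hL0 : ∀ i, 0 ≤ M.L0 i
  hβ0 : 0 ≤ M.β
  hβ1 : M.β ≤ 1
  hr : 0 ≤ M.r

end SM

/-- index `(l+1) ∧ ℓ` -/
def nextIdx {ℓ : ℕ} (l : Fin (ℓ+1)) : Fin (ℓ+1) := ⟨min (l.val + 1) ℓ, by omega⟩

namespace SM

open Classical in
/-- the backward-recursion survival component `Ψ̄^T_P`: at the terminal time it is the
indicator `1{τ_i > T}`; before the terminal time it is the conditional average, over the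
current atom of `𝓕 l`, of the next-period survival probabilities `Pnext` (the sum over
successor atoms `Σ ℙ(ω_{l+1}) P_i(t_{l+1}, ω_{l+1}) / ℙ(ω_l)`, written as a sum over points
of the atom, to which it is identical for `𝓕 (l+1)`-measurable `Pnext`). -/
noncomputable def Ψbar_P [MeasurableSpace Ω] [Fintype Ω] (M : SM Ω n ℓ)
    (𝓕 : Fin (ℓ+1) → MeasurableSpace Ω) (μ : MeasureTheory.Measure Ω)
    (Pnext : Ω → Fin n → ℝ) (τ : Fin n → Ω → ℝ)
    (l : Fin (ℓ+1)) (ω : Ω) (i : Fin n) : ℝ :=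
  if l = Fin.last ℓ then indR (M.T < τ i ω)
  else
    (∑ ω' ∈ Finset.univ.filter (fun ω' => ω' ∈ atomOf (𝓕 l) ω),
        (μ {ω'}).toReal * Pnext ω' i) / (μ (atomOf (𝓕 l) ω)).toReal

/-- the recursive clearing map `Ψ̄^T`: same as `Ψ^T` in the `K` and `τ` components, with the
`P` component replaced by the backward recursion `Ψ̄^T_P` -/
noncomputable def Ψbar [MeasurableSpace Ω] [Fintype Ω] (M : SM Ω n ℓ)
    (𝓕 : Fin (ℓ+1) → MeasurableSpace Ω) (μ : MeasureTheory.Measure Ω)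
    (z : Tri Ω n ℓ) : Tri Ω n ℓ :=
  (fun l ω i => M.ΨK l (z.2.1 l) ω i,
   fun l ω i => M.Ψbar_P 𝓕 μ (z.2.1 (nextIdx l)) z.2.2 l ω i,
   fun i ω => M.Ψτ z.1 i ω)

end SM


section Aux

open MeasureTheory

variable {Ω : Type*} [Fintype Ω] [MeasurableSpace Ω]

lemma funext_of_ae {μ : Measure Ω} (hpos : ∀ ω : Ω, 0 < μ {ω}) {f g : Ω → ℝ}
    (h : f =ᵐ[μ] g) : f = g := by
  funext ω
  by_contra hne
  have h0 : μ {x | ¬ f x = g x} = 0 := MeasureTheory.ae_iff.mp h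
  have h1 : μ {ω} ≤ μ {x | ¬ f x = g x} :=
    measure_mono (by intro x hx; simp only [Set.mem_singleton_iff] at hx; subst hx; exact hne)
  exact (hpos ω).ne' (le_antisymm (h0 ▸ h1) zero_le)

lemma measurableSet_of_top (hTop : (inferInstance : MeasurableSpace Ω) = ⊤)
    (s : Set Ω) : MeasurableSet s :=
  hTop.ge s (MeasurableSpace.measurableSet_top (s := s))

lemma msc_of_top (hTop : (inferInstance : MeasurableSpace Ω) = ⊤) :
    MeasurableSingletonClass Ω :=
  ⟨fun x => measurableSet_of_top hTop {x}⟩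

lemma meas_of_top (hTop : (inferInstance : MeasurableSpace Ω) = ⊤)
    {X : Type*} [MeasurableSpace X] (f : Ω → X) : Measurable f :=
  fun s _ => measurableSet_of_top hTop (f ⁻¹' s)

lemma mem_atomOf_self (m : MeasurableSpace Ω) (ω : Ω) : ω ∈ atomOf m ω :=
  Set.mem_sInter.2 fun _ hs => hs.2

lemma measurableSet_atomOf (m : MeasurableSpace Ω) (ω : Ω) :
    MeasurableSet[m] (atomOf m ω) :=
  MeasurableSet.sInter (Set.to_countable _) fun _ hs => hs.1

lemma atomOf_subset {m : MeasurableSpace Ω} {s : Set Ω} (hs : MeasurableSet[m] s) {ω : Ω}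
    (hω : ω ∈ s) : atomOf m ω ⊆ s :=
  Set.sInter_subset_of_mem ⟨hs, hω⟩

lemma mem_atomOf_symm {m : MeasurableSpace Ω} {ω ω' : Ω} (h : ω' ∈ atomOf m ω) :
    ω ∈ atomOf m ω' := by
  refine Set.mem_sInter.2 fun t ht => ?_
  by_contra hωt
  exact (atomOf_subset ht.1.compl hωt h) ht.2

lemma atomOf_eq_of_mem {m : MeasurableSpace Ω} {ω ω' : Ω} (h : ω' ∈ atomOf m ω) :
    atomOf m ω' = atomOf m ω := by
  have h2 := mem_atomOf_symm h
  refine Set.Subset.antisymm ?_ ?_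
  · exact Set.subset_sInter fun t ht =>
      Set.sInter_subset_of_mem ⟨ht.1, atomOf_subset ht.1 ht.2 h⟩
  · exact Set.subset_sInter fun t ht =>
      Set.sInter_subset_of_mem ⟨ht.1, atomOf_subset ht.1 ht.2 h2⟩

open Classical in
lemma measure_toReal_finset (hTop : (inferInstance : MeasurableSpace Ω) = ⊤)
    (μ : Measure Ω) [IsFiniteMeasure μ] (S : Finset Ω) :
    (μ (↑S : Set Ω)).toReal = ∑ x ∈ S, (μ {x}).toReal := by
  haveI := msc_of_top hTop
  have h1 : (↑S : Set Ω) = ⋃ x ∈ S, {x} := by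
    ext x
    simp only [Finset.mem_coe, Set.mem_iUnion, Set.mem_singleton_iff, exists_prop]
    exact ⟨fun hx => ⟨x, hx, rfl⟩, fun ⟨y, hy, hxy⟩ => hxy ▸ hy⟩
  rw [h1, measure_biUnion_finset ?_ (fun b _ => measurableSet_singleton b)]
  · exact ENNReal.toReal_sum fun a _ => measure_ne_top μ {a}
  · intro a _ b _ hab
    simp [Function.onFun, Set.disjoint_singleton, hab]

open Classical in
lemma setIntegral_eq_sum (hTop : (inferInstance : MeasurableSpace Ω) = ⊤)
    (μ : Measure Ω) [IsFiniteMeasure μ] (s : Set Ω) (f : Ω → ℝ) :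
    ∫ x in s, f x ∂μ = ∑ x ∈ Finset.univ.filter (fun x => x ∈ s), (μ {x}).toReal * f x := by
  haveI := msc_of_top hTop
  rw [MeasureTheory.integral_fintype Integrable.of_finite, Finset.sum_filter]
  refine Finset.sum_congr rfl fun x _ => ?_
  rw [Measure.real, Measure.restrict_apply (measurableSet_singleton x)]
  by_cases hx : x ∈ s
  · rw [if_pos hx, Set.inter_eq_self_of_subset_left (Set.singleton_subset_iff.2 hx)]
    simp [smul_eq_mul]
  · rw [if_neg hx]
    have h2 : ({x} : Set Ω) ∩ s = ∅ := by
      ext y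
      simp only [Set.mem_inter_iff, Set.mem_singleton_iff, Set.mem_empty_iff_false,
        iff_false, not_and]
      rintro rfl
      exact hx
    simp [h2]

/-- a function constant on the atoms of `m` is `m`-measurable -/
lemma measurable_of_const_on_atoms (m : MeasurableSpace Ω) {h : Ω → ℝ}
    (hconst : ∀ ω ω', ω' ∈ atomOf m ω → h ω' = h ω) : Measurable[m] h := by
  classical
  intro t _
  have hpre : h ⁻¹' t = ⋃ ω ∈ Finset.univ.filter (fun ω => h ω ∈ t), atomOf m ω := by
    ext x
    constructor
    · intro hx
      exact Set.mem_iUnion₂.mpr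
        ⟨x, Finset.mem_filter.2 ⟨Finset.mem_univ x, hx⟩, mem_atomOf_self m x⟩
    · intro hx
      obtain ⟨ω, hω, hxω⟩ := Set.mem_iUnion₂.mp hx
      have hωt : h ω ∈ t := by simpa using hω
      have : h x = h ω := hconst ω x hxω
      simpa [Set.mem_preimage, this] using hωt
  rw [hpre]
  exact Finset.measurableSet_biUnion _ fun ω _ => measurableSet_atomOf m ω

open Classical in
/-- the key combinatorial identity: summing atom-averages against the weights over an
`m`-measurable set gives back the weighted sum -/
lemma sum_atom_avg (m : MeasurableSpace Ω) {s : Set Ω} (hs : MeasurableSet[m] s)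
    (c g mA : Ω → ℝ)
    (hmA : ∀ ω, mA ω = ∑ x ∈ Finset.univ.filter (fun x => x ∈ atomOf m ω), c x)
    (hposA : ∀ ω, 0 < mA ω) :
    ∑ x ∈ Finset.univ.filter (fun x => x ∈ s),
        c x * ((∑ y ∈ Finset.univ.filter (fun y => y ∈ atomOf m x), c y * g y) / mA x)
      = ∑ x ∈ Finset.univ.filter (fun x => x ∈ s), c x * g x := by
  have hmAatom : ∀ ω ω', ω' ∈ atomOf m ω → mA ω' = mA ω := by
    intro ω ω' hmem
    rw [hmA, hmA, atomOf_eq_of_mem hmem]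
  calc
    ∑ x ∈ Finset.univ.filter (fun x => x ∈ s),
        c x * ((∑ y ∈ Finset.univ.filter (fun y => y ∈ atomOf m x), c y * g y) / mA x)
      = ∑ x ∈ Finset.univ.filter (fun x => x ∈ s), ∑ y ∈ Finset.univ,
          (if y ∈ atomOf m x then (c x / mA x) * (c y * g y) else 0) := by
        refine Finset.sum_congr rfl fun x _ => ?_
        rw [← Finset.sum_filter, ← Finset.mul_sum]
        ring
    _ = ∑ y ∈ Finset.univ, ∑ x ∈ Finset.univ.filter (fun x => x ∈ s),
          (if y ∈ atomOf m x then (c x / mA x) * (c y * g y) else 0) := Finset.sum_comm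
    _ = ∑ y ∈ Finset.univ, (if y ∈ s then c y * g y else 0) := by
        refine Finset.sum_congr rfl fun y _ => ?_
        by_cases hy : y ∈ s
        · rw [if_pos hy, ← Finset.sum_filter]
          have hset : (Finset.univ.filter (fun x => x ∈ s)).filter (fun x => y ∈ atomOf m x)
              = Finset.univ.filter (fun x => x ∈ atomOf m y) := by
            ext x
            simp only [Finset.mem_filter, Finset.mem_univ, true_and]
            constructor
            · rintro ⟨_, h2⟩
              exact mem_atomOf_symm h2
            · intro hx
              exact ⟨atomOf_subset hs hy hx, mem_atomOf_symm hx⟩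
          rw [hset]
          calc
            ∑ x ∈ Finset.univ.filter (fun x => x ∈ atomOf m y), (c x / mA x) * (c y * g y)
              = ∑ x ∈ Finset.univ.filter (fun x => x ∈ atomOf m y),
                  (c x / mA y) * (c y * g y) := by
                refine Finset.sum_congr rfl fun x hx => ?_
                rw [hmAatom y x (Finset.mem_filter.mp hx).2]
            _ = ((∑ x ∈ Finset.univ.filter (fun x => x ∈ atomOf m y), c x) / mA y)
                  * (c y * g y) := by
                rw [← Finset.sum_mul, ← Finset.sum_div]
            _ = c y * g y := by
                rw [← hmA y, div_self (ne_of_gt (hposA y)), one_mul]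
        · rw [if_neg hy]
          refine Finset.sum_eq_zero fun x hx => ?_
          exact if_neg fun hyx => hy (atomOf_subset hs (Finset.mem_filter.mp hx).2 hyx)
    _ = ∑ x ∈ Finset.univ.filter (fun x => x ∈ s), c x * g x := (Finset.sum_filter _ _).symm

open Classical in
/-- on a finite space, the conditional expectation w.r.t. a sub-σ-algebra is the
atom-average -/
lemma condexp_eq_atom_avg (hTop : (inferInstance : MeasurableSpace Ω) = ⊤)
    {μ : Measure Ω} [IsProbabilityMeasure μ] (hpos : ∀ ω : Ω, 0 < μ {ω})
    {ι : Type*} (F : ι → MeasurableSpace Ω) (j : ι) (g : Ω → ℝ) :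
    μ[g|F j] = fun ω => (∑ ω' ∈ Finset.univ.filter (fun ω' => ω' ∈ atomOf (F j) ω),
      (μ {ω'}).toReal * g ω') / (μ (atomOf (F j) ω)).toReal := by
  haveI := msc_of_top hTop
  have hm : F j ≤ (inferInstance : MeasurableSpace Ω) := le_trans le_top hTop.ge
  have hmA : ∀ ω, (μ (atomOf (F j) ω)).toReal
      = ∑ x ∈ Finset.univ.filter (fun x => x ∈ atomOf (F j) ω), (μ {x}).toReal := by
    intro ω
    have h1 := measure_toReal_finset hTop μ
      (Finset.univ.filter (fun x => x ∈ atomOf (F j) ω))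
    have h2 : (↑(Finset.univ.filter (fun x => x ∈ atomOf (F j) ω)) : Set Ω)
        = atomOf (F j) ω := by
      ext x
      simp only [Finset.coe_filter, Finset.mem_univ, true_and, Set.mem_setOf_eq]
    rw [h2] at h1
    exact h1
  have hposA : ∀ ω, 0 < (μ (atomOf (F j) ω)).toReal := fun ω =>
    ENNReal.toReal_pos
      (ne_of_gt (lt_of_lt_of_le (hpos ω)
        (measure_mono (Set.singleton_subset_iff.2 (mem_atomOf_self _ ω)))))
      (measure_ne_top μ _)
  have hmeas : Measurable[F j] (fun ω =>
      (∑ ω' ∈ Finset.univ.filter (fun ω' => ω' ∈ atomOf (F j) ω),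
        (μ {ω'}).toReal * g ω') / (μ (atomOf (F j) ω)).toReal) := by
    refine measurable_of_const_on_atoms (F j) ?_
    intro ω ω' hmem
    rw [atomOf_eq_of_mem hmem]
  have hae : (fun ω => (∑ ω' ∈ Finset.univ.filter (fun ω' => ω' ∈ atomOf (F j) ω),
      (μ {ω'}).toReal * g ω') / (μ (atomOf (F j) ω)).toReal) =ᵐ[μ] μ[g|F j] := by
    refine ae_eq_condExp_of_forall_setIntegral_eq hm Integrable.of_finite
      (fun s _ _ => Integrable.of_finite.integrableOn) (fun s hs _ => ?_)
      ⟨_, hmeas.stronglyMeasurable, Filter.EventuallyEq.rfl⟩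
    rw [setIntegral_eq_sum hTop μ s _, setIntegral_eq_sum hTop μ s g]
    exact sum_atom_avg (F j) hs _ g _ hmA hposA
  exact (funext_of_ae hpos hae).symm

end Aux

open SM in
/-- Proposition 2.8: a triple `(K, P, τ) ∈ 𝔻^T` is a fixed point of the
clearing map `Ψ^T` if and only if it is a fixed point of the recursive map `Ψ̄^T`. -/
theorem clearing_iff_recursive
    {Ω : Type*} [Fintype Ω] [MeasurableSpace Ω] {n ℓ : ℕ}
    (M : SM Ω n ℓ) (𝓕 : Fin (ℓ+1) → MeasurableSpace Ω) (μ : MeasureTheory.Measure Ω)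
    (hM : M.Valid 𝓕 μ)
    (z : Tri Ω n ℓ) (hz : M.memD 𝓕 z.1 z.2.1 z.2.2) :
    M.Ψmap 𝓕 μ z = z ↔ M.Ψbar 𝓕 μ z = z := by
  classical
  haveI := hM.hprob
  haveI := msc_of_top hM.hTop
  obtain ⟨K, P, τ⟩ := z
  have condexp_last : ∀ i : Fin n,
      μ[(fun ω' => indR (M.T < τ i ω'))|𝓕 (Fin.last ℓ)]
        = fun ω' => indR (M.T < τ i ω') := by
    intro i
    rw [hM.hlast]
    exact MeasureTheory.condExp_of_stronglyMeasurable le_rfl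
      ((meas_of_top hM.hTop _).stronglyMeasurable) Integrable.of_finite
  have tower : ∀ (l : Fin (ℓ+1)), l ≠ Fin.last ℓ → ∀ (g : Ω → ℝ) (ω : Ω),
      (∑ ω' ∈ Finset.univ.filter (fun ω' => ω' ∈ atomOf (𝓕 l) ω),
        (μ {ω'}).toReal * (μ[g|𝓕 (nextIdx l)]) ω') / (μ (atomOf (𝓕 l) ω)).toReal
      = (μ[g|𝓕 l]) ω := by
    intro l hl g ω
    have hle : l ≤ nextIdx l := by
      have := l.isLt
      simp only [Fin.le_def, nextIdx]
      omega
    have h1 := condexp_eq_atom_avg hM.hTop hM.hpos 𝓕 l (μ[g|𝓕 (nextIdx l)])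
    have h2 : μ[μ[g|𝓕 (nextIdx l)]|𝓕 l] = μ[g|𝓕 l] :=
      funext_of_ae hM.hpos
        (MeasureTheory.condExp_condExp_of_le (hM.hmono hle) (le_trans le_top hM.hTop.ge))
    rw [← h2]
    exact (congrFun h1 ω).symm
  simp only [SM.Ψmap, SM.Ψbar, Prod.mk.injEq]
  constructor
  · rintro ⟨hK, hP, hτ⟩
    refine ⟨hK, ?_, hτ⟩
    have hPl : ∀ (l' : Fin (ℓ+1)) (ω' : Ω) (i' : Fin n),
        P l' ω' i' = (μ[(fun ω'' => indR (M.T < τ i' ω''))|𝓕 l']) ω' := by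
      intro l' ω' i'
      exact (congrFun (congrFun (congrFun hP l') ω') i').symm
    funext l ω i
    by_cases hl : l = Fin.last ℓ
    · subst hl
      simp only [SM.Ψbar_P, if_pos rfl]
      rw [hPl (Fin.last ℓ) ω i]
      exact (congrFun (condexp_last i) ω).symm
    · simp only [SM.Ψbar_P, if_neg hl]
      rw [hPl l ω i, ← tower l hl (fun ω'' => indR (M.T < τ i ω'')) ω]
      exact congrArg (fun S => S / (μ (atomOf (𝓕 l) ω)).toReal)
        (Finset.sum_congr rfl fun ω' _ => by rw [hPl (nextIdx l) ω' i])
  · rintro ⟨hK, hP, hτ⟩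
    refine ⟨hK, ?_, hτ⟩
    have hPl : ∀ (l' : Fin (ℓ+1)) (ω' : Ω) (i' : Fin n),
        P l' ω' i' = M.Ψbar_P 𝓕 μ (P (nextIdx l')) τ l' ω' i' := by
      intro l' ω' i'
      exact (congrFun (congrFun (congrFun hP l') ω') i').symm
    have claim : ∀ (d : ℕ) (l : Fin (ℓ+1)), ℓ - l.val = d → ∀ (ω : Ω) (i : Fin n),
        P l ω i = (μ[(fun ω'' => indR (M.T < τ i ω''))|𝓕 l]) ω := by
      intro d
      induction d with
      | zero =>
        intro l hl ω i
        have hlast : l = Fin.last ℓ := by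
          have := l.isLt
          apply Fin.ext
          simp only [Fin.val_last]
          omega
        subst hlast
        rw [hPl (Fin.last ℓ) ω i]
        simp only [SM.Ψbar_P, if_pos rfl]
        exact (congrFun (condexp_last i) ω).symm
      | succ d ih =>
        intro l hl ω i
        have hlv : l.val < ℓ := by omega
        have hlne : l ≠ Fin.last ℓ := by
          intro h
          rw [h] at hlv
          simp only [Fin.val_last] at hlv
          omega
        have hnl : (nextIdx l).val = l.val + 1 := by
          simp only [nextIdx]
          omega
        have ihn : ∀ ω' : Ω, P (nextIdx l) ω' i
            = (μ[(fun ω'' => indR (M.T < τ i ω''))|𝓕 (nextIdx l)]) ω' :=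
          fun ω' => ih (nextIdx l) (by omega) ω' i
        rw [hPl l ω i]
        simp only [SM.Ψbar_P, if_neg hlne]
        rw [← tower l hlne (fun ω'' => indR (M.T < τ i ω'')) ω]
        exact congrArg (fun S => S / (μ (atomOf (𝓕 l) ω)).toReal)
          (Finset.sum_congr rfl fun ω' _ => by rw [ihn ω'])
    funext l ω i
    show M.ΨP 𝓕 μ τ l ω i = P l ω i
    rw [claim (ℓ - l.val) l rfl ω i]
    rfl

end Paper
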